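/- For all integers i ≥ 1 and j ≥ i, we have C(j,i)/2^j ≤ C(2i,i)/2^{2i}, where C(j,i) denotes the binomial coefficient; that is, the maximum of C(j,i)/2^j over integers j ≥ i is attained at j = 2i. -/
import Mathlib

lemma step_up (i n : ℕ) (h1 : i ≤ n) (h2 : n + 1 ≤ 2 * i) :
    2 * n.choose i ≤ (n + 1).choose i := by
  have hpos : 0 < n + 1 - i := by omega
  have key : 2 * n.choose i * (n + 1 - i) ≤ (n + 1).choose i * (n + 1 - i) := by
    calc 2 * n.choose i * (n + 1 - i) = n.choose i * (2 * (n + 1 - i)) := by ring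
      _ ≤ n.choose i * (n + 1) := by
          exact Nat.mul_le_mul_left _ (by omega)
      _ = (n + 1).choose i * (n + 1 - i) := Nat.choose_mul_succ_eq n i
  exact Nat.le_of_mul_le_mul_right key hpos

lemma step_down (i n : ℕ) (h1 : 2 * i ≤ n) (hi : 1 ≤ i) :
    (n + 1).choose i ≤ 2 * n.choose i := by
  have hpos : 0 < n + 1 - i := by omega
  have key : (n + 1).choose i * (n + 1 - i) ≤ 2 * n.choose i * (n + 1 - i) := by
    calc (n + 1).choose i * (n + 1 - i) = n.choose i * (n + 1) := (Nat.choose_mul_succ_eq n i).symm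
      _ ≤ n.choose i * (2 * (n + 1 - i)) := Nat.mul_le_mul_left _ (by omega)
      _ = 2 * n.choose i * (n + 1 - i) := by ring
  exact Nat.le_of_mul_le_mul_right key hpos

lemma up_all (i d : ℕ) (hd : d ≤ i) :
    2 ^ d * (2 * i - d).choose i ≤ (2 * i).choose i := by
  induction d with
  | zero => simp
  | succ d ih =>
    have hd' : d ≤ i := by omega
    have h1 : i ≤ 2 * i - (d + 1) := by omega
    have h2 : (2 * i - (d + 1)) + 1 ≤ 2 * i := by omega
    have hs := step_up i (2 * i - (d + 1)) h1 h2
    have heq : (2 * i - (d + 1)) + 1 = 2 * i - d := by omega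
    rw [heq] at hs
    calc 2 ^ (d + 1) * (2 * i - (d + 1)).choose i
        = 2 ^ d * (2 * (2 * i - (d + 1)).choose i) := by ring
      _ ≤ 2 ^ d * (2 * i - d).choose i := Nat.mul_le_mul_left _ hs
      _ ≤ (2 * i).choose i := ih hd'

lemma down_all (i d : ℕ) (hi : 1 ≤ i) :
    (2 * i + d).choose i ≤ 2 ^ d * (2 * i).choose i := by
  induction d with
  | zero => simp
  | succ d ih =>
    have hs := step_down i (2 * i + d) (by omega) hi
    calc (2 * i + (d + 1)).choose i = ((2 * i + d) + 1).choose i := by ring_nf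
      _ ≤ 2 * (2 * i + d).choose i := hs
      _ ≤ 2 * (2 ^ d * (2 * i).choose i) := Nat.mul_le_mul_left _ ih
      _ = 2 ^ (d + 1) * (2 * i).choose i := by ring

lemma nat_key (i j : ℕ) (hi : 1 ≤ i) (hj : i ≤ j) :
    2 ^ (2 * i) * j.choose i ≤ 2 ^ j * (2 * i).choose i := by
  rcases le_or_gt j (2 * i) with h | h
  · have hd : 2 * i - j ≤ i := by omega
    have := up_all i (2 * i - j) hd
    have heq : 2 * i - (2 * i - j) = j := by omega
    rw [heq] at this
    calc 2 ^ (2 * i) * j.choose i = 2 ^ j * (2 ^ (2 * i - j) * j.choose i) := by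
          rw [← mul_assoc, ← pow_add]; congr 2; omega
      _ ≤ 2 ^ j * (2 * i).choose i := Nat.mul_le_mul_left _ this
  · have := down_all i (j - 2 * i) hi
    have heq : 2 * i + (j - 2 * i) = j := by omega
    rw [heq] at this
    calc 2 ^ (2 * i) * j.choose i ≤ 2 ^ (2 * i) * (2 ^ (j - 2 * i) * (2 * i).choose i) :=
          Nat.mul_le_mul_left _ this
      _ = 2 ^ j * (2 * i).choose i := by
          have h2 : 2 * i + (j - 2 * i) = j := by omega
          rw [← mul_assoc, ← pow_add, h2]

/-- For integers `i ≥ 1` and `j ≥ i`, `C(j,i)/2^j ≤ C(2i,i)/2^(2i)`. -/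
theorem choose_div_pow_le (i j : ℕ) (hi : 1 ≤ i) (hj : i ≤ j) :
    (j.choose i : ℝ) / 2 ^ j ≤ ((2 * i).choose i : ℝ) / 2 ^ (2 * i) := by
  rw [div_le_div_iff₀ (by positivity) (by positivity)]
  have h := nat_key i j hi hj
  have : ((2 ^ (2 * i) * j.choose i : ℕ) : ℝ) ≤ ((2 ^ j * (2 * i).choose i : ℕ) : ℝ) := by
    exact_mod_cast h
  push_cast at this
  linarith
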